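/- arXiv:math/0610369 — 2 statements merged into one kernel-verified Lean document; each statement's English description precedes it below -/
import Mathlib

section
/- Let N be a finite set. Suppose that for every subset I ⊆ N a set X_I is given, and for every pair of subsets K ⊆ I a subset X_{I,K} ⊆ X_I and a map φ_{I,K} : X_{I,K} → X_K are given, satisfying: (0) X_{I,I} = X_I and φ_{I,I} is the identity map of X_I; (1) if K' ⊆ K ⊆ I then X_{I,K} ⊆ X_{I,K'}; (2) if K' ⊆ K ⊆ I and x ∈ X_{I,K}, then φ_{I,K}(x) ∈ X_{K,K'} and φ_{I,K'}(x) = φ_{K,K'}(φ_{I,K}(x)). Define a relation ∼ on the disjoint union ⨆_{I⊆N} X_I by declaring x ∈ X_I related to y ∈ X_J if and only if there exists K ⊆ I ∩ J with x ∈ X_{I,K}, y ∈ X_{J,K}, and φ_{I,K}(x) = φ_{J,K}(y). Then ∼ is an equivalence relation; in particular, if x ∈ X_I, y ∈ X_J, z ∈ X_K satisfy x ∼ y and y ∼ z, then x ∼ z. -/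
/-- Auxiliary transitivity lemma. -/
theorem patchable_trans_aux {N : Type*} [Fintype N] [DecidableEq N]
    (X : Finset N → Type*)
    (D : ∀ _I _K : Finset N, Set (X _I))
    (φ : ∀ _I _K : Finset N, X _I → X _K)
    (h1 : ∀ I K K' : Finset N, K' ⊆ K → K ⊆ I → D I K ⊆ D I K')
    (h2 : ∀ I K K' : Finset N, K' ⊆ K → K ⊆ I → ∀ x ∈ D I K,
      φ I K x ∈ D K K' ∧ φ I K' x = φ K K' (φ I K x))
    (I J K : Finset N) (x : X I) (y : X J) (z : X K)
    (hxy : ∃ K₁ : Finset N, K₁ ⊆ I ∩ J ∧ x ∈ D I K₁ ∧ y ∈ D J K₁ ∧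
        φ I K₁ x = φ J K₁ y)
    (hyz : ∃ K₂ : Finset N, K₂ ⊆ J ∩ K ∧ y ∈ D J K₂ ∧ z ∈ D K K₂ ∧
        φ J K₂ y = φ K K₂ z) :
    ∃ K₃ : Finset N, K₃ ⊆ I ∩ K ∧ x ∈ D I K₃ ∧ z ∈ D K K₃ ∧
        φ I K₃ x = φ K K₃ z := by
  obtain ⟨K₁, hK₁, hx1, hy1, he1⟩ := hxy
  obtain ⟨K₂, hK₂, hy2, hz2, he2⟩ := hyz
  have hK₁I : K₁ ⊆ I := hK₁.trans (Finset.inter_subset_left)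
  have hK₁J : K₁ ⊆ J := hK₁.trans (Finset.inter_subset_right)
  have hK₂J : K₂ ⊆ J := hK₂.trans (Finset.inter_subset_left)
  have hK₂K : K₂ ⊆ K := hK₂.trans (Finset.inter_subset_right)
  refine ⟨K₁ ∩ K₂, ?_, ?_, ?_, ?_⟩
  · exact Finset.inter_subset_inter hK₁I hK₂K
  · exact h1 I K₁ (K₁ ∩ K₂) Finset.inter_subset_left hK₁I hx1
  · exact h1 K K₂ (K₁ ∩ K₂) Finset.inter_subset_right hK₂K hz2
  · have e1 := (h2 I K₁ (K₁ ∩ K₂) Finset.inter_subset_left hK₁I x hx1).2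
    have e2 := (h2 J K₁ (K₁ ∩ K₂) Finset.inter_subset_left hK₁J y hy1).2
    have e3 := (h2 J K₂ (K₁ ∩ K₂) Finset.inter_subset_right hK₂J y hy2).2
    have e4 := (h2 K K₂ (K₁ ∩ K₂) Finset.inter_subset_right hK₂K z hz2).2
    rw [e1, he1, ← e2, e3, he2, ← e4]

/-- Lemma 2.2.1: the patching relation on the disjoint union of the charts of a
patchable pair is an equivalence relation; in particular it is transitive. -/
theorem patchable_rel_equivalence {N : Type*} [Fintype N] [DecidableEq N]
    (X : Finset N → Type*)
    (D : ∀ _I _K : Finset N, Set (X _I))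
    (φ : ∀ _I _K : Finset N, X _I → X _K)
    (h0 : ∀ I : Finset N, D I I = Set.univ ∧ ∀ x : X I, φ I I x = x)
    (h1 : ∀ I K K' : Finset N, K' ⊆ K → K ⊆ I → D I K ⊆ D I K')
    (h2 : ∀ I K K' : Finset N, K' ⊆ K → K ⊆ I → ∀ x ∈ D I K,
      φ I K x ∈ D K K' ∧ φ I K' x = φ K K' (φ I K x)) :
    Equivalence (fun p q : (I : Finset N) × X I =>
      ∃ K : Finset N, K ⊆ p.1 ∩ q.1 ∧ p.2 ∈ D p.1 K ∧ q.2 ∈ D q.1 K ∧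
        φ p.1 K p.2 = φ q.1 K q.2) ∧
    (∀ (I J K : Finset N) (x : X I) (y : X J) (z : X K),
      (∃ K₁ : Finset N, K₁ ⊆ I ∩ J ∧ x ∈ D I K₁ ∧ y ∈ D J K₁ ∧
          φ I K₁ x = φ J K₁ y) →
      (∃ K₂ : Finset N, K₂ ⊆ J ∩ K ∧ y ∈ D J K₂ ∧ z ∈ D K K₂ ∧
          φ J K₂ y = φ K K₂ z) →
      (∃ K₃ : Finset N, K₃ ⊆ I ∩ K ∧ x ∈ D I K₃ ∧ z ∈ D K K₃ ∧
          φ I K₃ x = φ K K₃ z)) := by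
  constructor
  · constructor
    · intro p
      refine ⟨p.1, by simp, ?_, ?_, rfl⟩ <;> simp [(h0 p.1).1]
    · rintro p q ⟨K, hK, hp, hq, he⟩
      exact ⟨K, by rwa [Finset.inter_comm], hq, hp, he.symm⟩
    · intro p q r hpq hqr
      exact patchable_trans_aux X D φ h1 h2 _ _ _ _ _ _ hpq hqr
  · intro I J K x y z
    exact patchable_trans_aux X D φ h1 h2 I J K x y z
end

section
/- Assume U_i° ⊆ U_i for every i ∈ {1,…,n}. For each I ⊆ {1,…,n} set P_I = X_I ∖ ⋃_{J⊊I} X_J. Then the sets P_I, I ⊆ {1,…,n}, are pairwise disjoint and ⋃_{I⊆{1,…,n}} P_I = X; that is, {P_I} is a partition of X. -/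
/-- The chart `X_I = (⋂_{i∈I} U_i) ∩ (⋂_{j∉I} (X ∖ U_j°))` of Example 2.3.1. -/
def chart {X : Type*} (n : ℕ) (U Uo : Fin n → Set X) (I : Finset (Fin n)) : Set X :=
  (⋂ i ∈ I, U i) ∩ (⋂ j ∈ Iᶜ, (Uo j)ᶜ)

/-- The pieces `P_I = X_I ∖ ⋃_{J⊊I} X_J`. -/
def chartPiece {X : Type*} (n : ℕ) (U Uo : Fin n → Set X) (I : Finset (Fin n)) : Set X :=
  chart n U Uo I \ ⋃ (J : Finset (Fin n)) (_ : J ⊂ I), chart n U Uo J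

open Classical in
lemma mem_chart_iff {X : Type*} (n : ℕ) (U Uo : Fin n → Set X)
    (x : X) (I : Finset (Fin n)) :
    x ∈ chart n U Uo I ↔ (∀ i ∈ I, x ∈ U i) ∧ (∀ j, j ∉ I → x ∉ Uo j) := by
  simp [chart, Set.mem_iInter]

open Classical in
lemma mem_chartPiece_iff {X : Type*} (n : ℕ) (U Uo : Fin n → Set X) (h : ∀ i, Uo i ⊆ U i)
    (x : X) (I : Finset (Fin n)) :
    x ∈ chartPiece n U Uo I ↔ I = Finset.univ.filter (fun i => x ∈ Uo i) := by
  set I₀ : Finset (Fin n) := Finset.univ.filter (fun i => x ∈ Uo i) with hI₀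
  have hmemI₀ : ∀ i, i ∈ I₀ ↔ x ∈ Uo i := by
    intro i; simp [hI₀]
  have hchart₀ : x ∈ chart n U Uo I₀ := by
    rw [mem_chart_iff]
    constructor
    · intro i hi; exact h i ((hmemI₀ i).1 hi)
    · intro j hj; exact fun hx => hj ((hmemI₀ j).2 hx)
  constructor
  · rintro ⟨hc, hnc⟩
    rw [mem_chart_iff] at hc
    have hsub : I₀ ⊆ I := by
      intro i hi
      by_contra hni
      exact hc.2 i hni ((hmemI₀ i).1 hi)
    rcases eq_or_lt_of_le (Finset.le_iff_subset.2 hsub) with heq | hlt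
    · exact heq.symm
    · exfalso
      apply hnc
      exact Set.mem_iUnion.2 ⟨I₀, Set.mem_iUnion.2 ⟨hlt, hchart₀⟩⟩
  · rintro rfl
    refine ⟨hchart₀, ?_⟩
    intro hx
    rcases Set.mem_iUnion.1 hx with ⟨J, hJ⟩
    rcases Set.mem_iUnion.1 hJ with ⟨hJI, hxJ⟩
    rw [mem_chart_iff] at hxJ
    rcases Finset.exists_of_ssubset hJI with ⟨i, hiI, hiJ⟩
    exact hxJ.2 i hiJ ((hmemI₀ i).1 hiI)

/-- If `U_i° ⊆ U_i` for all `i`, the sets `P_I = X_I ∖ ⋃_{J⊊I} X_J` are pairwise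
disjoint and cover `X` (Section 2.4 of the paper, in Example 2.3.1). -/
theorem chartPiece_partition {X : Type*} (n : ℕ) (hn : 0 < n)
    (U Uo : Fin n → Set X) (h : ∀ i, Uo i ⊆ U i) :
    (Pairwise fun I J : Finset (Fin n) =>
        Disjoint (chartPiece n U Uo I) (chartPiece n U Uo J)) ∧
    ⋃ I : Finset (Fin n), chartPiece n U Uo I = Set.univ := by
  classical
  constructor
  · intro I J hIJ
    rw [Set.disjoint_left]
    intro x hxI hxJ
    rw [mem_chartPiece_iff n U Uo h] at hxI hxJ
    exact hIJ (hxI.trans hxJ.symm)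
  · ext x
    simp only [Set.mem_iUnion, Set.mem_univ, iff_true]
    exact ⟨_, (mem_chartPiece_iff n U Uo h x _).2 rfl⟩
end
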